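/- Let ξ = (w_1,…,w_N) ∈ Ξ with X_1(ξ) = {i : w_i = 0}, X_3(ξ) = {i : w_i = 1/n}, X_2(ξ) = {i : 0 < w_i < 1/n}, suppose F_Φ(ξ; i) = s for every i ∈ X_2(ξ), and suppose there exist ξ_0 ∈ Ξ and δ > 0 with Φ(ξ) − Φ(ξ_0) > δ. If X_2(ξ) is nonempty and X_3(ξ) is empty, then X_1(ξ) is nonempty and min_{i ∈ X_1(ξ)} F_Φ(ξ; i) − s ≤ −δ. -/
import Mathlib


theorem stmt_8
    (N : ℕ) (hN : 1 ≤ N)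
    (Δ : Set (Fin N → ℝ))
    (hΔ : Δ = {w : Fin N → ℝ | (∀ i, 0 ≤ w i) ∧ ∑ i, w i = 1})
    (Φ : (Fin N → ℝ) → ℝ)
    (hconv : ConvexOn ℝ Δ Φ)
    (F : (Fin N → ℝ) → (Fin N → ℝ) → ℝ)
    (hF : ∀ ξ ∈ Δ, ∀ η ∈ Δ,
      Filter.Tendsto (fun α : ℝ => (Φ ((1 - α) • ξ + α • η) - Φ ξ) / α)
        (nhdsWithin 0 (Set.Ioi 0)) (nhds (F ξ η)))
    (hlin : ∀ ξ ∈ Δ, ∀ η ∈ Δ, F ξ η = ∑ i, η i * F ξ (Pi.single i 1))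
    (n : ℕ) (hn1 : 1 ≤ n) (hnN : n ≤ N)
    (Ξ : Set (Fin N → ℝ))
    (hΞ : Ξ = {w : Fin N → ℝ | w ∈ Δ ∧ ∀ i, w i ≤ 1 / (n : ℝ)})
    (ξ : Fin N → ℝ) (hmem : ξ ∈ Ξ)
    (X1 X2 X3 : Set (Fin N))
    (hX1 : X1 = {i | ξ i = 0})
    (hX2 : X2 = {i | 0 < ξ i ∧ ξ i < 1 / (n : ℝ)})
    (hX3 : X3 = {i | ξ i = 1 / (n : ℝ)})
    (s : ℝ) (hs : ∀ i ∈ X2, F ξ (Pi.single i 1) = s)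
    (ξ0 : Fin N → ℝ) (hξ0 : ξ0 ∈ Ξ)
    (δ : ℝ) (hδ : 0 < δ)
    (hgap : Φ ξ - Φ ξ0 > δ)
    (hX2ne : X2.Nonempty) (hX3e : X3 = ∅) :
    X1.Nonempty ∧ sInf ((fun i => F ξ (Pi.single i 1)) '' X1) - s ≤ -δ := by
  subst hΔ hΞ hX1 hX2 hX3
  obtain ⟨hξΔ, hξn⟩ := hmem
  obtain ⟨hξ0Δ, hξ0n⟩ := hξ0
  have hlt : ∀ i, ξ i ≠ 0 → 0 < ξ i ∧ ξ i < 1 / (n : ℝ) := by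
    intro i h
    refine ⟨lt_of_le_of_ne (hξΔ.1 i) (Ne.symm h), ?_⟩
    rcases lt_or_eq_of_le (hξn i) with h' | h'
    · exact h'
    · exact absurd h' (by have := Set.eq_empty_iff_forall_notMem.mp hX3e i; simpa using this)
  -- F ξ η ≤ Φ η - Φ ξ for η in the simplex
  have hA : ∀ η ∈ ({w : Fin N → ℝ | (∀ i, 0 ≤ w i) ∧ ∑ i, w i = 1}), F ξ η ≤ Φ η - Φ ξ := by
    intro η hη
    refine le_of_tendsto (hF ξ hξΔ η hη) ?_
    filter_upwards [Ioo_mem_nhdsGT_of_mem (by norm_num : (0:ℝ) ∈ Set.Ico 0 1)] with α hα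
    have h1 : Φ ((1-α) • ξ + α • η) ≤ (1-α) * Φ ξ + α * Φ η :=
      hconv.2 hξΔ hη (by linarith [hα.2]) (le_of_lt hα.1) (by ring)
    rw [div_le_iff₀ hα.1]
    nlinarith [hα.1]
  have hFself : F ξ ξ = 0 := by
    have h := hF ξ hξΔ ξ hξΔ
    have heq : (fun α : ℝ => (Φ ((1 - α) • ξ + α • ξ) - Φ ξ) / α) = fun _ => (0:ℝ) := by
      funext α
      have hx : (1 - α) • ξ + α • ξ = ξ := by module
      rw [hx]; simp
    rw [heq] at h
    exact (tendsto_nhds_unique h tendsto_const_nhds)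
  have hs0 : s = 0 := by
    have h1 : F ξ ξ = ∑ i, ξ i * F ξ (Pi.single i 1) := hlin ξ hξΔ ξ hξΔ
    have h2 : ∑ i, ξ i * F ξ (Pi.single i 1) = ∑ i, ξ i * s := by
      refine Finset.sum_congr rfl (fun i _ => ?_)
      rcases eq_or_ne (ξ i) 0 with h | h
      · simp [h]
      · rw [hs i (hlt i h)]
    have h3 : ∑ i, ξ i * s = s := by rw [← Finset.sum_mul, hξΔ.2, one_mul]
    rw [h1, h2, h3] at hFself
    exact hFself
  have hmain : ∑ i ∈ Finset.univ.filter (fun i => ξ i = 0), ξ0 i * F ξ (Pi.single i 1) < -δ := by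
    have h1 : F ξ ξ0 = ∑ i, ξ0 i * F ξ (Pi.single i 1) := hlin ξ hξΔ ξ0 hξ0Δ
    have h2 : F ξ ξ0 ≤ Φ ξ0 - Φ ξ := hA ξ0 hξ0Δ
    have h3 : ∑ i ∈ Finset.univ.filter (fun i => ¬ ξ i = 0), ξ0 i * F ξ (Pi.single i 1) = 0 := by
      refine Finset.sum_eq_zero (fun i hi => ?_)
      simp only [Finset.mem_filter] at hi
      rw [hs i (hlt i hi.2), hs0, mul_zero]
    have h4 := Finset.sum_filter_add_sum_filter_not Finset.univ (fun i => ξ i = 0)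
      (fun i => ξ0 i * F ξ (Pi.single i 1))
    rw [h3] at h4
    rw [h1] at h2
    linarith
  have hX1ne : {i | ξ i = 0}.Nonempty := by
    by_contra h
    rw [Set.not_nonempty_iff_eq_empty] at h
    have he : Finset.univ.filter (fun i => ξ i = 0) = ∅ := by
      ext i
      simpa using Set.eq_empty_iff_forall_notMem.mp h i
    rw [he, Finset.sum_empty] at hmain
    linarith
  refine ⟨hX1ne, ?_⟩
  set S := (fun i => F ξ (Pi.single i 1)) '' {i | ξ i = 0} with hS
  have hSfin : S.Finite := Set.Finite.image _ (Set.toFinite _)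
  have hSne : S.Nonempty := hX1ne.image _
  have hbdd : BddBelow S := hSfin.bddBelow
  set m := sInf S with hm
  have hle : ∀ i, ξ i = 0 → m ≤ F ξ (Pi.single i 1) := fun i hi => csInf_le hbdd ⟨i, hi, rfl⟩
  set T := Finset.univ.filter (fun i => ξ i = 0) with hT
  have ht0 : 0 ≤ ∑ i ∈ T, ξ0 i := Finset.sum_nonneg (fun i _ => hξ0Δ.1 i)
  have ht1 : ∑ i ∈ T, ξ0 i ≤ 1 := by
    rw [← hξ0Δ.2]
    exact Finset.sum_le_sum_of_subset_of_nonneg (Finset.subset_univ T) (fun i _ _ => hξ0Δ.1 i)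
  have hlb : m * (∑ i ∈ T, ξ0 i) ≤ ∑ i ∈ T, ξ0 i * F ξ (Pi.single i 1) := by
    rw [Finset.mul_sum]
    refine Finset.sum_le_sum (fun i hi => ?_)
    rw [hT, Finset.mem_filter] at hi
    calc m * ξ0 i = ξ0 i * m := mul_comm _ _
    _ ≤ ξ0 i * F ξ (Pi.single i 1) :=
        mul_le_mul_of_nonneg_left (hle i hi.2) (hξ0Δ.1 i)
  have hm0 : m < 0 := by nlinarith
  have hfin : m ≤ -δ := by nlinarith
  rw [hs0]
  simpa using hfin
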